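/- Let (sₙ) be a sequence of nonnegative reals bounded by a positive natural number d, and suppose s_{n+1} ≤ (1−αₙ)sₙ + αₙ rₙ + γₙ for all n, where (αₙ) ⊂ [0,1], (γₙ) ⊂ [0,∞), and (rₙ) are real sequences. Assume there exist functions A, R, G : ℕ → ℕ such that (i) Σ_{i=1}^{A(k)} αᵢ ≥ k for all k; (ii) rₙ ≤ 1/(k+1) for all n ≥ R(k); (iii) Σ_{i=G(k)+1}^{G(k)+n} γᵢ ≤ 1/(k+1) for all k, n. Then for all k and all n ≥ θ(k) := A(N−1+⌈ln(3d(k+1))⌉)+1, where N := max{R(3k+2), G(3k+2)+1}, we have sₙ ≤ 1/(k+1). -/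

import Mathlib

theorem stmt3 (s α r γ : ℕ → ℝ) (d : ℕ) (hd : 0 < d)
    (hs : ∀ n, 0 ≤ s n) (hsd : ∀ n, s n ≤ d)
    (hα : ∀ n, α n ∈ Set.Icc (0 : ℝ) 1) (hγ : ∀ n, 0 ≤ γ n)
    (hrec : ∀ n, s (n + 1) ≤ (1 - α n) * s n + α n * r n + γ n)
    (A R G : ℕ → ℕ)
    (hA : ∀ k : ℕ, (k : ℝ) ≤ ∑ i ∈ Finset.Icc 1 (A k), α i)
    (hR : ∀ k : ℕ, ∀ n ≥ R k, r n ≤ 1 / (k + 1))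
    (hG : ∀ k n : ℕ, ∑ i ∈ Finset.Icc (G k + 1) (G k + n), γ i ≤ 1 / (k + 1)) :
    ∀ k : ℕ, ∀ n ≥ A (max (R (3 * k + 2)) (G (3 * k + 2) + 1) - 1 +
        ⌈Real.log (3 * d * (k + 1))⌉₊) + 1,
      s n ≤ 1 / (k + 1) := by
  intro k n hn
  have hk1 : (0:ℝ) < (k:ℝ) + 1 := by positivity
  have hd' : (1:ℝ) ≤ (d:ℝ) := by exact_mod_cast hd
  set K := 3 * k + 2 with hK
  set N := max (R K) (G K + 1) with hNdef
  set L := ⌈Real.log (3 * (d:ℝ) * ((k:ℝ) + 1))⌉₊ with hLdef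
  set m := N - 1 + L with hm
  set c : ℝ := 1 / (3 * ((k:ℝ) + 1)) with hc
  have hcpos : 0 < c := by positivity
  have hNpos : 1 ≤ N := le_trans (Nat.le_add_left 1 (G K)) (le_max_right _ _)
  have hceq : 1 / ((K:ℝ) + 1) = c := by rw [hc, hK]; push_cast; ring
  have hlogpos : 0 < Real.log (3 * (d:ℝ) * ((k:ℝ) + 1)) := by
    apply Real.log_pos; nlinarith
  have hL1 : 1 ≤ L := Nat.ceil_pos.mpr hlogpos
  -- r bound
  have rc : ∀ i, N ≤ i → r i ≤ c := by
    intro i hi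
    have h := hR K i (le_trans (le_max_left _ _) hi)
    rw [hceq] at h; exact h
  -- γ sums bound
  have hγbound : ∀ t, ∑ i ∈ Finset.Ico N t, γ i ≤ c := by
    intro t
    rcases le_or_gt t N with h | h
    · rw [Finset.Ico_eq_empty (by omega)]; simpa using hcpos.le
    · have hGN : G K + 1 ≤ N := le_max_right _ _
      have hsub : Finset.Ico N t ⊆ Finset.Icc (G K + 1) (G K + (t - 1 - G K)) := by
        intro x hx
        simp only [Finset.mem_Ico, Finset.mem_Icc] at *
        omega
      calc ∑ i ∈ Finset.Ico N t, γ i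
          ≤ ∑ i ∈ Finset.Icc (G K + 1) (G K + (t - 1 - G K)), γ i :=
            Finset.sum_le_sum_of_subset_of_nonneg hsub (fun i _ _ => hγ i)
        _ ≤ 1 / ((K:ℝ) + 1) := hG K _
        _ = c := hceq
  -- key induction
  have key : ∀ t, s (N + t) ≤ (∏ i ∈ Finset.Ico N (N + t), (1 - α i)) * s N
      + (1 - ∏ i ∈ Finset.Ico N (N + t), (1 - α i)) * c
      + ∑ i ∈ Finset.Ico N (N + t), γ i := by
    intro t
    induction t with
    | zero => simp
    | succ t ih =>
      have hα0 := (hα (N + t)).1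
      have hα1 := (hα (N + t)).2
      have hP0 : 0 ≤ ∏ i ∈ Finset.Ico N (N + t), (1 - α i) :=
        Finset.prod_nonneg fun i _ => by linarith [(hα i).2]
      have hS0 : 0 ≤ ∑ i ∈ Finset.Ico N (N + t), γ i :=
        Finset.sum_nonneg fun i _ => hγ i
      have hrc := rc (N + t) (Nat.le_add_right _ _)
      have hrec' := hrec (N + t)
      rw [show N + (t + 1) = (N + t) + 1 by ring,
        Finset.prod_Ico_succ_top (Nat.le_add_right N t),
        Finset.sum_Ico_succ_top (Nat.le_add_right N t)]
      nlinarith [mul_le_mul_of_nonneg_left ih (by linarith : (0:ℝ) ≤ 1 - α (N + t)),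
        mul_le_mul_of_nonneg_left hrc hα0, mul_nonneg hα0 hS0, hcpos.le]
  -- A m is large
  have hAm : N ≤ A m := by
    have h1 : (m:ℝ) ≤ ∑ i ∈ Finset.Icc 1 (A m), α i := hA m
    have h2 : ∑ i ∈ Finset.Icc 1 (A m), α i ≤ (A m : ℝ) := by
      calc ∑ i ∈ Finset.Icc 1 (A m), α i ≤ ∑ i ∈ Finset.Icc 1 (A m), (1:ℝ) :=
            Finset.sum_le_sum fun i _ => (hα i).2
        _ = (A m : ℝ) := by simp [Nat.card_Icc]
    have : m ≤ A m := by exact_mod_cast h1.trans h2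
    omega
  have hnN : N ≤ n := by omega
  have hkey := key (n - N)
  rw [show N + (n - N) = n by omega] at hkey
  -- lower bound on α sum
  have hαsum : Real.log (3 * (d:ℝ) * ((k:ℝ) + 1)) ≤ ∑ i ∈ Finset.Ico N n, α i := by
    have split : ∑ i ∈ Finset.Ioc 0 (N - 1), α i + ∑ i ∈ Finset.Ioc (N - 1) (A m), α i
        = ∑ i ∈ Finset.Ioc 0 (A m), α i :=
      Finset.sum_Ioc_consecutive _ (by omega) (by omega)
    have e1 : Finset.Ioc 0 (A m) = Finset.Icc 1 (A m) := by
      ext x; simp only [Finset.mem_Ioc, Finset.mem_Icc]; omega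
    have e2 : Finset.Ioc (N - 1) (A m) = Finset.Ico N (A m + 1) := by
      ext x; simp only [Finset.mem_Ioc, Finset.mem_Ico]; omega
    have h3 : ∑ i ∈ Finset.Ioc 0 (N - 1), α i ≤ (N:ℝ) - 1 := by
      calc ∑ i ∈ Finset.Ioc 0 (N - 1), α i ≤ ∑ i ∈ Finset.Ioc 0 (N - 1), (1:ℝ) :=
            Finset.sum_le_sum fun i _ => (hα i).2
        _ = ((N - 1 : ℕ) : ℝ) := by simp [Nat.card_Ioc]
        _ = (N:ℝ) - 1 := by push_cast [Nat.cast_sub hNpos]; ring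
    have h4 : (m:ℝ) ≤ ∑ i ∈ Finset.Ioc 0 (A m), α i := by
      rw [e1]; exact hA m
    have hmcast : (m:ℝ) = ((N:ℝ) - 1) + (L:ℝ) := by
      rw [hm]; push_cast [Nat.cast_sub hNpos]; ring
    have h5 : (L:ℝ) ≤ ∑ i ∈ Finset.Ico N (A m + 1), α i := by
      rw [← e2]; linarith [split, h3, h4, hmcast]
    have h6 : Finset.Ico N (A m + 1) ⊆ Finset.Ico N n :=
      Finset.Ico_subset_Ico_right (by omega)
    have h7 : ∑ i ∈ Finset.Ico N (A m + 1), α i ≤ ∑ i ∈ Finset.Ico N n, α i :=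
      Finset.sum_le_sum_of_subset_of_nonneg h6 (fun i _ _ => (hα i).1)
    calc Real.log (3 * (d:ℝ) * ((k:ℝ) + 1)) ≤ (L:ℝ) := by rw [hLdef]; exact Nat.le_ceil _
      _ ≤ ∑ i ∈ Finset.Ico N (A m + 1), α i := h5
      _ ≤ ∑ i ∈ Finset.Ico N n, α i := h7
  -- product bound
  have hprod : ∏ i ∈ Finset.Ico N n, (1 - α i)
      ≤ Real.exp (-∑ i ∈ Finset.Ico N n, α i) := by
    calc ∏ i ∈ Finset.Ico N n, (1 - α i)
        ≤ ∏ i ∈ Finset.Ico N n, Real.exp (-α i) := by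
          apply Finset.prod_le_prod
          · intro i _; linarith [(hα i).2]
          · intro i _; linarith [Real.add_one_le_exp (-α i)]
      _ = Real.exp (∑ i ∈ Finset.Ico N n, (-α i)) := (Real.exp_sum _ _).symm
      _ = Real.exp (-∑ i ∈ Finset.Ico N n, α i) := by rw [Finset.sum_neg_distrib]
  have h3d : (0:ℝ) < 3 * (d:ℝ) * ((k:ℝ) + 1) := by positivity
  have hexp : Real.exp (-∑ i ∈ Finset.Ico N n, α i) ≤ 1 / (3 * (d:ℝ) * ((k:ℝ) + 1)) := by
    calc Real.exp (-∑ i ∈ Finset.Ico N n, α i)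
        ≤ Real.exp (-Real.log (3 * (d:ℝ) * ((k:ℝ) + 1))) :=
          Real.exp_le_exp.mpr (by linarith)
      _ = 1 / (3 * (d:ℝ) * ((k:ℝ) + 1)) := by
          rw [Real.exp_neg, Real.exp_log h3d, one_div]
  have hP := hprod.trans hexp
  have hPn0 : 0 ≤ ∏ i ∈ Finset.Ico N n, (1 - α i) :=
    Finset.prod_nonneg fun i _ => by linarith [(hα i).2]
  have hPd : (∏ i ∈ Finset.Ico N n, (1 - α i)) * (d:ℝ) ≤ c := by
    have hd0 : (0:ℝ) < (d:ℝ) := by positivity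
    calc (∏ i ∈ Finset.Ico N n, (1 - α i)) * (d:ℝ)
        ≤ (1 / (3 * (d:ℝ) * ((k:ℝ) + 1))) * (d:ℝ) :=
          mul_le_mul_of_nonneg_right hP hd0.le
      _ = c := by rw [hc]; field_simp
  have hPsN : (∏ i ∈ Finset.Ico N n, (1 - α i)) * s N
      ≤ (∏ i ∈ Finset.Ico N n, (1 - α i)) * (d:ℝ) :=
    mul_le_mul_of_nonneg_left (hsd N) hPn0
  have hSn : ∑ i ∈ Finset.Ico N n, γ i ≤ c := hγbound n
  have hfin : c + c + c = 1 / ((k:ℝ) + 1) := by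
    rw [hc]; field_simp; ring_nf
  have hPc : 0 ≤ (∏ i ∈ Finset.Ico N n, (1 - α i)) * c := mul_nonneg hPn0 hcpos.le
  calc s n ≤ _ := hkey
    _ ≤ 1 / ((k:ℝ) + 1) := by nlinarith
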